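/- Let q ≥ 2, let A ⊆ [n] with |A| = m ≥ 1, let π_A : [q]^n → [q]^A be the coordinate projection onto A, let s ≥ 1 and ε > 0, and let C ⊆ [q]^n be a code with |C| ≥ qs satisfying min_{y∈[q]^A} max_{c∈C} d_H(π_A(c), y) ≤ m(1 − 1/q − ε). Then there exists a subcode C' ⊆ C with |C'| ≥ s such that radh(C') ≤ 1 − 1/q − (m/n)ε. -/

import Mathlib

open Finset

/-- The Chebyshev radius of a code: `radh(C) = (1/n) min_{y∈[q]^n} max_{c∈C} d_H(c,y)`. -/
noncomputable def radhCode {q n : ℕ} (C : Finset (Fin n → Fin q)) : ℝ :=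
  (1 / (n : ℝ)) * ⨅ y : Fin n → Fin q, sSup {d : ℝ | ∃ c ∈ C, d = (hammingDist c y : ℝ)}

theorem projection_preserves_radius (q n : ℕ) (hq : 2 ≤ q) (hn : 1 ≤ n)
    (A : Finset (Fin n)) (m : ℕ) (hA : A.card = m) (hm : 1 ≤ m)
    (s : ℕ) (hs : 1 ≤ s) (ε : ℝ) (hε : 0 < ε)
    (C : Finset (Fin n → Fin q)) (hCcard : q * s ≤ C.card)
    (hproj : (⨅ y : {i // i ∈ A} → Fin q,
        sSup {d : ℝ | ∃ c ∈ C, d = (hammingDist (fun i : {i // i ∈ A} => c i.1) y : ℝ)}) ≤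
      (m : ℝ) * (1 - 1 / (q : ℝ) - ε)) :
    ∃ C' ⊆ C, s ≤ C'.card ∧ radhCode C' ≤ 1 - 1 / (q : ℝ) - ((m : ℝ) / (n : ℝ)) * ε := by
  have hq0 : 0 < q := by omega
  have hn0 : 0 < n := hn
  have hmn : m ≤ n := by
    have := A.card_le_univ
    simpa [hA] using this
  have hFinQ : Nonempty (Fin q) := ⟨⟨0, hq0⟩⟩
  -- Step 1: get a good center on A
  obtain ⟨y0, hy0⟩ := Finite.exists_min (fun y : {i // i ∈ A} → Fin q =>
      sSup {d : ℝ | ∃ c ∈ C, d = (hammingDist (fun i : {i // i ∈ A} => c i.1) y : ℝ)})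
  have hy0le : sSup {d : ℝ | ∃ c ∈ C, d = (hammingDist (fun i : {i // i ∈ A} => c i.1) y0 : ℝ)}
      ≤ (m : ℝ) * (1 - 1 / (q : ℝ) - ε) := le_trans (le_ciInf hy0) hproj
  have hdA : ∀ c ∈ C, (hammingDist (fun i : {i // i ∈ A} => c i.1) y0 : ℝ)
      ≤ (m : ℝ) * (1 - 1 / (q : ℝ) - ε) := by
    intro c hc
    have hbddA : BddAbove {d : ℝ | ∃ c ∈ C, d = (hammingDist (fun i : {i // i ∈ A} => c i.1) y0 : ℝ)} := ?_
    · exact le_trans (le_csSup hbddA ⟨c, hc, rfl⟩) hy0le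
    have hfin : {d : ℝ | ∃ c ∈ C, d = (hammingDist (fun i : {i // i ∈ A} => c i.1) y0 : ℝ)} =
        (fun c : Fin n → Fin q => (hammingDist (fun i : {i // i ∈ A} => c i.1) y0 : ℝ)) '' ↑C := by
      ext d
      constructor
      · rintro ⟨c, hc, rfl⟩; exact ⟨c, hc, rfl⟩
      · rintro ⟨c, hc, rfl⟩; exact ⟨c, hc, rfl⟩
    rw [hfin]
    exact (C.finite_toSet.image _).bddAbove
  -- Step 2: counting on the complement
  set B : Finset (Fin n) := Aᶜ with hB
  set T : ℕ := (n - m) * (q - 1) / q with hT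
  have hBcard : B.card = n - m := by
    simp [hB, Finset.card_compl, hA]
  have hex : ∀ c : Fin n → Fin q, ∃ t : Fin q, (B.filter fun j => c j ≠ t).card ≤ T := by
    intro c
    by_contra h
    push_neg at h
    have hsum : ∑ t : Fin q, (B.filter fun j => c j ≠ t).card = B.card * (q - 1) := by
      have h1 : ∀ t : Fin q, (B.filter fun j => c j ≠ t).card
          = ∑ j ∈ B, if c j ≠ t then 1 else 0 := fun t => Finset.card_filter _ _
      simp_rw [h1]
      rw [Finset.sum_comm]
      have h2 : ∀ j : Fin n, ∑ t : Fin q, (if c j ≠ t then 1 else 0) = q - 1 := by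
        intro j
        rw [← Finset.card_filter, Finset.filter_ne, Finset.card_erase_of_mem (Finset.mem_univ _),
          Finset.card_univ, Fintype.card_fin]
      rw [Finset.sum_congr rfl fun j _ => h2 j, Finset.sum_const, smul_eq_mul]
    have hlow : q * (T + 1) ≤ ∑ t : Fin q, (B.filter fun j => c j ≠ t).card := by
      calc q * (T + 1) = ∑ _t : Fin q, (T + 1) := by
            simp [Finset.sum_const, Finset.card_univ, mul_comm]
        _ ≤ _ := Finset.sum_le_sum fun t _ => Nat.succ_le_of_lt (h t)
    have hup : (n - m) * (q - 1) < (T + 1) * q :=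
      (Nat.div_lt_iff_lt_mul hq0).mp (Nat.lt_succ_self T)
    rw [hsum, hBcard] at hlow
    rw [Nat.mul_comm (T+1) q] at hup
    omega
  have hpig : ∃ t : Fin q, s ≤ (C.filter fun c => (B.filter fun j => c j ≠ t).card ≤ T).card := by
    have hsub : C ⊆ Finset.univ.biUnion
        (fun t : Fin q => C.filter fun c => (B.filter fun j => c j ≠ t).card ≤ T) := by
      intro c hc
      obtain ⟨t, ht⟩ := hex c
      exact Finset.mem_biUnion.mpr ⟨t, Finset.mem_univ t, Finset.mem_filter.mpr ⟨hc, ht⟩⟩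
    have h1 : C.card ≤ ∑ t : Fin q,
        (C.filter fun c => (B.filter fun j => c j ≠ t).card ≤ T).card := by
      refine le_trans (Finset.card_le_card hsub) ?_
      apply Finset.card_biUnion_le
    have hqs : ∑ _t : Fin q, s = q * s := by
      rw [Finset.sum_const, Finset.card_univ, Fintype.card_fin, smul_eq_mul]
    have h2 : ∑ _t : Fin q, s ≤ ∑ t : Fin q,
        (C.filter fun c => (B.filter fun j => c j ≠ t).card ≤ T).card := by
      rw [hqs]; exact le_trans hCcard h1
    obtain ⟨t, _, ht⟩ := Finset.exists_le_of_sum_le Finset.univ_nonempty h2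
    exact ⟨t, ht⟩
  obtain ⟨t, ht⟩ := hpig
  set C' : Finset (Fin n → Fin q) :=
    C.filter fun c => (B.filter fun j => c j ≠ t).card ≤ T with hC'
  refine ⟨C', Finset.filter_subset _ _, ht, ?_⟩
  -- the center
  set y : Fin n → Fin q := fun j => if h : j ∈ A then y0 ⟨j, h⟩ else t with hy
  have hKey : ∀ c ∈ C', (hammingDist c y : ℝ)
      ≤ (n : ℝ) * (1 - 1 / (q : ℝ)) - (m : ℝ) * ε := by
    intro c hc
    obtain ⟨hcC, hdB⟩ := Finset.mem_filter.mp hc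
    have hsplit : hammingDist c y = (A.filter fun j => c j ≠ y j).card
        + (B.filter fun j => c j ≠ y j).card := by
      have hu : (Finset.univ : Finset (Fin n)) = A ∪ Aᶜ := (Finset.union_compl A).symm
      show (Finset.univ.filter fun j => c j ≠ y j).card = _
      rw [hu, Finset.filter_union,
        Finset.card_union_of_disjoint (Finset.disjoint_filter_filter disjoint_compl_right)]
    have hApart : (A.filter fun j => c j ≠ y j).card
        = hammingDist (fun i : {i // i ∈ A} => c i.1) y0 := by
      show _ = (Finset.univ.filter fun i : {i // i ∈ A} => c i.1 ≠ y0 i).card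
      rw [Finset.univ_eq_attach]
      refine (Finset.card_bij (fun (i : {i // i ∈ A}) _ => i.1) ?_ ?_ ?_).symm
      · rintro ⟨j, hj⟩ hmem
        simp only [Finset.mem_filter, Finset.mem_attach, true_and] at hmem
        simp only [Finset.mem_filter]
        refine ⟨hj, ?_⟩
        rw [hy]
        simpa [dif_pos hj] using hmem
      · rintro ⟨j1, hj1⟩ _ ⟨j2, hj2⟩ _ hvq
        exact Subtype.ext hvq
      · intro j hj
        simp only [Finset.mem_filter] at hj
        obtain ⟨hjA, hne⟩ := hj
        refine ⟨⟨j, hjA⟩, ?_, rfl⟩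
        simp only [Finset.mem_filter, Finset.mem_attach, true_and]
        rw [hy] at hne
        simpa [dif_pos hjA] using hne
    have hBpart : (B.filter fun j => c j ≠ y j).card ≤ T := by
      have : (B.filter fun j => c j ≠ y j) = (B.filter fun j => c j ≠ t) := by
        apply Finset.filter_congr
        intro j hjB
        have hjA : j ∉ A := Finset.mem_compl.mp hjB
        rw [hy]
        simp [dif_neg hjA]
      rw [this]; exact hdB
    have hTle : (T : ℝ) ≤ ((n : ℝ) - (m : ℝ)) * ((q : ℝ) - 1) / (q : ℝ) := by
      have h1 : (T : ℝ) ≤ (((n - m) * (q - 1) : ℕ) : ℝ) / (q : ℝ) := Nat.cast_div_le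
      rw [Nat.cast_mul, Nat.cast_sub hmn, Nat.cast_sub (by omega : 1 ≤ q)] at h1
      simpa using h1
    have hdAc : ((A.filter fun j => c j ≠ y j).card : ℝ)
        ≤ (m : ℝ) * (1 - 1 / (q : ℝ) - ε) := by
      rw [hApart]; exact hdA c hcC
    have hdBc : ((B.filter fun j => c j ≠ y j).card : ℝ)
        ≤ ((n : ℝ) - (m : ℝ)) * ((q : ℝ) - 1) / (q : ℝ) :=
      le_trans (by exact_mod_cast hBpart) hTle
    have hcast : (hammingDist c y : ℝ) = ((A.filter fun j => c j ≠ y j).card : ℝ)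
        + ((B.filter fun j => c j ≠ y j).card : ℝ) := by
      rw [hsplit]; push_cast; ring
    rw [hcast]
    have hQ : (0 : ℝ) < (q : ℝ) := by exact_mod_cast hq0
    have heq : (m : ℝ) * (1 - 1 / (q : ℝ) - ε) + ((n : ℝ) - (m : ℝ)) * ((q : ℝ) - 1) / (q : ℝ)
        = (n : ℝ) * (1 - 1 / (q : ℝ)) - (m : ℝ) * ε := by
      field_simp
      ring
    linarith [hdAc, hdBc]
  -- conclude
  have hC'ne : C'.Nonempty := Finset.card_pos.mp (by omega)
  obtain ⟨c0, hc0⟩ := hC'ne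
  have hbdd : BddBelow (Set.range fun y' : Fin n → Fin q =>
      sSup {d : ℝ | ∃ c ∈ C', d = (hammingDist c y' : ℝ)}) := by
    refine ⟨0, ?_⟩
    rintro x ⟨y', rfl⟩
    refine Real.sSup_nonneg ?_
    rintro d ⟨c, hc, rfl⟩
    exact Nat.cast_nonneg _
  have hsup : sSup {d : ℝ | ∃ c ∈ C', d = (hammingDist c y : ℝ)}
      ≤ (n : ℝ) * (1 - 1 / (q : ℝ)) - (m : ℝ) * ε := by
    refine csSup_le ⟨_, c0, hc0, rfl⟩ ?_
    rintro d ⟨c, hc, rfl⟩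
    exact hKey c hc
  have hinf : (⨅ y' : Fin n → Fin q, sSup {d : ℝ | ∃ c ∈ C', d = (hammingDist c y' : ℝ)})
      ≤ (n : ℝ) * (1 - 1 / (q : ℝ)) - (m : ℝ) * ε :=
    le_trans (ciInf_le hbdd y) hsup
  have hNpos : (0 : ℝ) < (n : ℝ) := by exact_mod_cast hn0
  calc radhCode C'
      = (1 / (n : ℝ)) * ⨅ y' : Fin n → Fin q,
          sSup {d : ℝ | ∃ c ∈ C', d = (hammingDist c y' : ℝ)} := rfl
    _ ≤ (1 / (n : ℝ)) * ((n : ℝ) * (1 - 1 / (q : ℝ)) - (m : ℝ) * ε) :=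
        mul_le_mul_of_nonneg_left hinf (by positivity)
    _ = 1 - 1 / (q : ℝ) - ((m : ℝ) / (n : ℝ)) * ε := by
        field_simp
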